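/- Let p > 3 be prime and b ∈ F_p nonzero. For S_λ = Σ_{x ∈ F_p} σ(x³ + λ x² + b x), the variance of (S_λ)_{λ∈F_p} equals p − 1 − σ(b) − 1/p. -/

import Mathlib

open Finset

variable {p : ℕ} [Fact p.Prime]

private lemma aux_char2 (hp : 3 < p) : ringChar (ZMod p) ≠ 2 := by
  rw [ZMod.ringChar_zmod_n]; omega

private lemma aux_affine (hp : 3 < p) (u v : ZMod p) (hu : u ≠ 0) :
    ∑ l : ZMod p, quadraticChar (ZMod p) (u * l + v) = 0 := by
  rw [← quadraticChar_sum_zero (aux_char2 hp)]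
  exact Fintype.sum_bijective (fun l => u * l + v)
    (((Equiv.mulLeft₀ u hu).trans (Equiv.addRight v)).bijective)
    _ _ (fun l => rfl)

private lemma aux_shift (hp : 3 < p) (e : ZMod p) (he : e ≠ 0) :
    ∑ l : ZMod p, quadraticChar (ZMod p) (l * (l + e)) = -1 := by
  rw [← Finset.sum_erase (f := fun l : ZMod p => quadraticChar (ZMod p) (l * (l + e)))
    (univ : Finset (ZMod p)) (a := 0) (by simp)]
  have key : ∀ l ∈ (univ : Finset (ZMod p)).erase 0,
      quadraticChar (ZMod p) (l * (l + e)) = quadraticChar (ZMod p) (1 + e * l⁻¹) := by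
    intro l hl
    have hl0 : l ≠ 0 := (Finset.mem_erase.mp hl).1
    have : l * (l + e) = l ^ 2 * (1 + e * l⁻¹) := by field_simp
    rw [this, map_mul, quadraticChar_sq_one' hl0, one_mul]
  rw [Finset.sum_congr rfl key]
  have hbij := Finset.sum_bij' (s := (univ : Finset (ZMod p)).erase 0)
    (t := (univ : Finset (ZMod p)).erase 1)
    (i := fun l _ => 1 + e * l⁻¹) (j := fun t _ => e * (t - 1)⁻¹)
    (f := fun l => quadraticChar (ZMod p) (1 + e * l⁻¹))
    (g := fun t => quadraticChar (ZMod p) t)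
    ?_ ?_ ?_ ?_ ?_
  · rw [hbij, Finset.sum_erase_eq_sub (Finset.mem_univ 1),
      quadraticChar_sum_zero (aux_char2 hp), map_one]; ring
  · intro l hl
    have hl0 : l ≠ 0 := (Finset.mem_erase.mp hl).1
    simp only [Finset.mem_erase, Finset.mem_univ, and_true]
    intro h
    have h2 : e * l⁻¹ = 0 := by linear_combination h
    exact he (by simpa [inv_eq_zero, hl0] using mul_eq_zero.mp h2)
  · intro t ht
    have ht1 : t ≠ 1 := (Finset.mem_erase.mp ht).1
    simp only [Finset.mem_erase, Finset.mem_univ, and_true]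
    exact mul_ne_zero he (inv_ne_zero (sub_ne_zero.mpr ht1))
  · intro l hl
    have hl0 : l ≠ 0 := (Finset.mem_erase.mp hl).1
    field_simp
    simp [he]
  · intro t ht
    have ht1 : t ≠ 1 := (Finset.mem_erase.mp ht).1
    have h1 : t - 1 ≠ 0 := sub_ne_zero.mpr ht1
    field_simp
    ring
  · intro l hl; rfl

private lemma aux_tworoots (hp : 3 < p) (c d : ZMod p) :
    ∑ l : ZMod p, quadraticChar (ZMod p) ((l - c) * (l - d)) =
      if c = d then ((p : ℤ) - 1) else -1 := by
  split_ifs with h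
  · subst h
    have key : ∀ l : ZMod p, quadraticChar (ZMod p) ((l - c) * (l - c)) =
        1 - (if l = c then 1 else 0) := by
      intro l
      by_cases hl : l = c
      · simp [hl]
      · have : l - c ≠ 0 := sub_ne_zero.mpr hl
        rw [← sq, quadraticChar_sq_one' this]
        simp [hl]
    rw [Finset.sum_congr rfl (fun l _ => key l), Finset.sum_sub_distrib,
      Finset.sum_const, Finset.sum_ite_eq' univ c (fun _ => (1:ℤ))]
    simp [ZMod.card]
  · have he : c - d ≠ 0 := sub_ne_zero.mpr h
    rw [← aux_shift hp (c - d) he]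
    exact Fintype.sum_bijective (fun l : ZMod p => l - c)
      (Equiv.subRight c).bijective _ _ (fun l => by congr 1; ring)

private lemma aux_inner (hp : 3 < p) (b x y : ZMod p) (hb : b ≠ 0) (hx : x ≠ 0) (hy : y ≠ 0) :
    ∑ l : ZMod p, quadraticChar (ZMod p) (x ^ 3 + l * x ^ 2 + b * x) *
        quadraticChar (ZMod p) (y ^ 3 + l * y ^ 2 + b * y)
      = if x = y ∨ x * y = b then ((p : ℤ) - 1) else -1 := by
  set c := -(x ^ 2 + b) * x⁻¹ with hc
  set d := -(y ^ 2 + b) * y⁻¹ with hd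
  have hterm : ∀ l : ZMod p,
      quadraticChar (ZMod p) (x ^ 3 + l * x ^ 2 + b * x) *
        quadraticChar (ZMod p) (y ^ 3 + l * y ^ 2 + b * y) =
      quadraticChar (ZMod p) ((l - c) * (l - d)) := by
    intro l
    have hfac : (x ^ 3 + l * x ^ 2 + b * x) * (y ^ 3 + l * y ^ 2 + b * y)
        = (x * y) ^ 2 * ((l - c) * (l - d)) := by
      rw [hc, hd]; field_simp; ring
    rw [← map_mul, hfac, map_mul, quadraticChar_sq_one' (mul_ne_zero hx hy), one_mul]
  rw [Finset.sum_congr rfl (fun l _ => hterm l), aux_tworoots hp c d]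
  have e1 : x * c = -(x ^ 2 + b) := by rw [hc]; field_simp
  have e2 : y * d = -(y ^ 2 + b) := by rw [hd]; field_simp
  have hiff : c = d ↔ (x = y ∨ x * y = b) := by
    constructor
    · intro h
      have h2 : (x - y) * (b - x * y) = 0 := by
        linear_combination (-y) * e1 + x * e2 + x * y * h
      rcases mul_eq_zero.mp h2 with h4 | h4
      · exact Or.inl (sub_eq_zero.mp h4)
      · exact Or.inr ((sub_eq_zero.mp h4).symm)
    · rintro (rfl | h)
      · rfl
      · apply mul_left_cancel₀ (mul_ne_zero hx hy)
        linear_combination y * e1 - x * e2 - (x - y) * h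
  simp only [hiff]

private lemma aux_mean (hp : 3 < p) (b : ZMod p) :
    ∑ l : ZMod p, ∑ x : ZMod p, quadraticChar (ZMod p) (x ^ 3 + l * x ^ 2 + b * x) = 0 := by
  rw [Finset.sum_comm]
  apply Finset.sum_eq_zero
  intro x _
  by_cases hx : x = 0
  · simp [hx]
  · rw [← aux_affine hp (x ^ 2) (x ^ 3 + b * x) (pow_ne_zero 2 hx)]
    exact Finset.sum_congr rfl (fun l _ => by congr 1; ring)

private lemma aux_row (hp : 3 < p) (b x : ZMod p) (hb : b ≠ 0) (hx : x ≠ 0) :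
    ∑ y ∈ (univ.erase (0 : ZMod p)), (if x = y ∨ x * y = b then ((p : ℤ) - 1) else -1)
      = -(p : ℤ) + 1 + p * (if x ^ 2 = b then 1 else 2) := by
  have h1p : (1 : ℕ) ≤ p := by omega
  have hcardE : (univ.erase (0 : ZMod p)).card = p - 1 := by
    rw [Finset.card_erase_of_mem (mem_univ 0), Finset.card_univ, ZMod.card]
  have hterm : ∀ y : ZMod p, (if x = y ∨ x * y = b then ((p : ℤ) - 1) else -1)
      = -1 + (if x = y ∨ x * y = b then (p : ℤ) else 0) := by
    intro y; split_ifs <;> ring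
  rw [Finset.sum_congr rfl (fun y _ => hterm y), Finset.sum_add_distrib, Finset.sum_const,
    ← Finset.sum_filter, Finset.sum_const, hcardE]
  have hfilter : ((univ.erase (0 : ZMod p)).filter (fun y => x = y ∨ x * y = b)).card
      = if x ^ 2 = b then 1 else 2 := by
    split_ifs with hsq
    · have hset : (univ.erase (0 : ZMod p)).filter (fun y => x = y ∨ x * y = b) = {x} := by
        ext y
        simp only [Finset.mem_filter, Finset.mem_erase, Finset.mem_univ, true_and,
          Finset.mem_singleton, and_true]
        constructor
        · rintro ⟨hy0, h | h⟩
          · exact h.symm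
          · have : x * y = x * x := by rw [h, ← hsq, sq]
            exact mul_left_cancel₀ hx this
        · rintro rfl
          exact ⟨hx, Or.inl rfl⟩
      rw [hset, Finset.card_singleton]
    · have hne : x ≠ b / x := by
        intro h
        exact hsq (by rw [sq]; field_simp at h ⊢; linear_combination h)
      have hset : (univ.erase (0 : ZMod p)).filter (fun y => x = y ∨ x * y = b)
          = {x, b / x} := by
        ext y
        simp only [Finset.mem_filter, Finset.mem_erase, Finset.mem_univ, true_and, and_true,
          Finset.mem_insert, Finset.mem_singleton]
        constructor
        · rintro ⟨hy0, h | h⟩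
          · exact Or.inl h.symm
          · exact Or.inr ((eq_div_iff hx).mpr (by linear_combination h))
        · rintro (rfl | rfl)
          · exact ⟨hx, Or.inl rfl⟩
          · exact ⟨div_ne_zero hb hx, Or.inr (by field_simp)⟩
      rw [hset, Finset.card_insert_of_notMem (by simpa using hne), Finset.card_singleton]
  rw [hfilter]
  split_ifs <;> simp [nsmul_eq_mul] <;> push_cast [h1p] <;> ring

private lemma aux_sq (hp : 3 < p) (b : ZMod p) (hb : b ≠ 0) :
    ∑ l : ZMod p, (∑ x : ZMod p, quadraticChar (ZMod p) (x ^ 3 + l * x ^ 2 + b * x)) ^ 2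
      = (p : ℤ) ^ 2 - p - 1 - p * quadraticChar (ZMod p) b := by
  have h1p : (1 : ℕ) ≤ p := by omega
  have step1 : ∑ l : ZMod p, (∑ x : ZMod p,
        quadraticChar (ZMod p) (x ^ 3 + l * x ^ 2 + b * x)) ^ 2
      = ∑ x : ZMod p, ∑ y : ZMod p, ∑ l : ZMod p,
        quadraticChar (ZMod p) (x ^ 3 + l * x ^ 2 + b * x) *
          quadraticChar (ZMod p) (y ^ 3 + l * y ^ 2 + b * y) := by
    have e1 : ∀ l : ZMod p, (∑ x : ZMod p,
        quadraticChar (ZMod p) (x ^ 3 + l * x ^ 2 + b * x)) ^ 2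
        = ∑ x : ZMod p, ∑ y : ZMod p,
          quadraticChar (ZMod p) (x ^ 3 + l * x ^ 2 + b * x) *
            quadraticChar (ZMod p) (y ^ 3 + l * y ^ 2 + b * y) := by
      intro l; rw [sq, Finset.sum_mul_sum]
    rw [Finset.sum_congr rfl (fun l _ => e1 l), Finset.sum_comm]
    exact Finset.sum_congr rfl (fun x _ => Finset.sum_comm)
  rw [step1]
  rw [← Finset.sum_erase (f := fun x : ZMod p => ∑ y : ZMod p, ∑ l : ZMod p,
        quadraticChar (ZMod p) (x ^ 3 + l * x ^ 2 + b * x) *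
          quadraticChar (ZMod p) (y ^ 3 + l * y ^ 2 + b * y))
      (univ : Finset (ZMod p)) (a := 0) (by simp)]
  have step2 : ∀ x ∈ (univ.erase (0 : ZMod p)),
      (∑ y : ZMod p, ∑ l : ZMod p,
        quadraticChar (ZMod p) (x ^ 3 + l * x ^ 2 + b * x) *
          quadraticChar (ZMod p) (y ^ 3 + l * y ^ 2 + b * y))
      = -(p : ℤ) + 1 + p * (if x ^ 2 = b then 1 else 2) := by
    intro x hxmem
    have hx : x ≠ 0 := (Finset.mem_erase.mp hxmem).1
    rw [← Finset.sum_erase (f := fun y : ZMod p => ∑ l : ZMod p,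
          quadraticChar (ZMod p) (x ^ 3 + l * x ^ 2 + b * x) *
            quadraticChar (ZMod p) (y ^ 3 + l * y ^ 2 + b * y))
        (univ : Finset (ZMod p)) (a := 0) (by simp)]
    rw [← aux_row hp b x hb hx]
    apply Finset.sum_congr rfl
    intro y hymem
    exact aux_inner hp b x y hb hx (Finset.mem_erase.mp hymem).1
  rw [Finset.sum_congr rfl step2, Finset.sum_add_distrib, Finset.sum_const,
    Finset.card_erase_of_mem (mem_univ 0), Finset.card_univ, ZMod.card]
  have hsqcount : ∑ x ∈ (univ.erase (0 : ZMod p)), (if x ^ 2 = b then (1 : ℤ) else 2)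
      = 2 * ((p : ℤ) - 1) - (quadraticChar (ZMod p) b + 1) := by
    have hterm : ∀ x : ZMod p, (if x ^ 2 = b then (1 : ℤ) else 2)
        = 2 - (if x ^ 2 = b then (1 : ℤ) else 0) := by intro x; split_ifs <;> ring
    rw [Finset.sum_congr rfl (fun x _ => hterm x), Finset.sum_sub_distrib, Finset.sum_const,
      ← Finset.sum_filter, Finset.sum_const,
      Finset.card_erase_of_mem (mem_univ 0), Finset.card_univ, ZMod.card]
    have hfe : (univ.erase (0 : ZMod p)).filter (fun x => x ^ 2 = b)
        = univ.filter (fun x : ZMod p => x ^ 2 = b) := by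
      ext x
      simp only [Finset.mem_filter, Finset.mem_erase, Finset.mem_univ, true_and, and_true]
      refine ⟨fun h => h.2, fun h => ⟨fun h0 => hb (by rw [← h, h0]; norm_num), h⟩⟩
    have hcount := quadraticChar_card_sqrts (aux_char2 hp) b
    rw [Set.toFinset_setOf] at hcount
    rw [hfe, nsmul_eq_mul, nsmul_eq_mul, hcount]
    push_cast [h1p]
    ring
  rw [← Finset.mul_sum, hsqcount]
  simp only [nsmul_eq_mul]
  push_cast [h1p]
  ring

theorem stmt8 (p : ℕ) [Fact p.Prime] (hp : 3 < p) (b : ZMod p) (hb : b ≠ 0) :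
    ((((∑ l : ZMod p, (∑ x : ZMod p, quadraticChar (ZMod p) (x ^ 3 + l * x ^ 2 + b * x)) ^ 2) : ℤ) : ℚ) / p) -
      ((((∑ l : ZMod p, ∑ x : ZMod p, quadraticChar (ZMod p) (x ^ 3 + l * x ^ 2 + b * x)) : ℤ) : ℚ) / p) ^ 2
      = p - 1 - quadraticChar (ZMod p) b - 1 / p := by
  rw [aux_sq hp b hb, aux_mean hp b]
  have hp0 : (p : ℚ) ≠ 0 := Nat.cast_ne_zero.mpr (by omega)
  push_cast
  field_simp
  ring
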